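/- Let 0 ≤ v < V, ω > 0, β > 0 and let (x, y) ∈ ℝ² satisfy x² + y² = β². Then min over u_hf ∈ [−1, 1] of the max over u_lf ∈ [−π, π] of x·(−y ω u_hf + v sin u_lf) + y·(x ω u_hf + v cos u_lf − V) equals 0 if and only if y = β v / V and x = β √(1 − (v/V)²) or x = −β √(1 − (v/V)²). That is, the boundary of the nonusable part consists of exactly these two points, symmetric about the y-axis. -/

import Mathlib

/-- The boundary of the nonusable part: for `0 ≤ v < V`, the minimax
`min_{u_hf ∈ [−1,1]} max_{u_lf ∈ [−π,π]} (x,y) ⬝ f(x,y,u_lf,u_hf)` on the circle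
`x² + y² = β²` equals `0` exactly at the two points with `y = β v / V` and
`x = ± β √(1 − (v/V)²)`, symmetric about the y-axis. -/
theorem stmt_9 (v V ω β x y : ℝ) (hv : 0 ≤ v) (hvV : v < V) (hV : 0 < V)
    (hω : 0 < ω) (hβ : 0 < β) (hxy : x ^ 2 + y ^ 2 = β ^ 2) :
    IsLeast { m : ℝ | ∃ uhf ∈ Set.Icc (-1 : ℝ) 1,
        IsGreatest ((fun ulf => x * (-(y * ω * uhf) + v * Real.sin ulf)
          + y * (x * ω * uhf + v * Real.cos ulf - V)) '' Set.Icc (-Real.pi) Real.pi) m }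
      (0 : ℝ)
    ↔ (y = β * v / V ∧
        (x = β * Real.sqrt (1 - (v / V) ^ 2) ∨ x = -(β * Real.sqrt (1 - (v / V) ^ 2)))) := by
  -- the inner max is v*β - y*V for every uhf
  have hz : (⟨y, x⟩ : ℂ) ≠ 0 := by
    intro h
    have hy : y = 0 := congrArg Complex.re h
    have hx : x = 0 := congrArg Complex.im h
    nlinarith
  have habs : ‖(⟨y, x⟩ : ℂ)‖ = β := by
    rw [Complex.norm_def, Complex.normSq_mk]
    rw [show y * y + x * x = β ^ 2 by nlinarith]
    exact Real.sqrt_sq hβ.le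
  set θ := Complex.arg ⟨y, x⟩ with hθ
  have hsin : Real.sin θ = x / β := by rw [hθ, Complex.sin_arg _, habs]
  have hcos : Real.cos θ = y / β := by rw [hθ, Complex.cos_arg hz, habs]
  have hθmem : θ ∈ Set.Icc (-Real.pi) Real.pi :=
    Set.Ioc_subset_Icc_self (Complex.arg_mem_Ioc _)
  have hmax : ∀ uhf : ℝ,
      IsGreatest ((fun ulf => x * (-(y * ω * uhf) + v * Real.sin ulf)
        + y * (x * ω * uhf + v * Real.cos ulf - V)) '' Set.Icc (-Real.pi) Real.pi)
      (v * β - y * V) := by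
    intro u
    constructor
    · refine ⟨θ, hθmem, ?_⟩
      simp only [hsin, hcos]
      field_simp
      linear_combination v * hxy
    · rintro m ⟨t, _, rfl⟩
      have h1 : Real.sin t ^ 2 + Real.cos t ^ 2 = 1 := Real.sin_sq_add_cos_sq t
      simp only
      have hle : x * Real.sin t + y * Real.cos t ≤ β := by
        nlinarith [sq_nonneg (x * Real.cos t - y * Real.sin t),
          sq_nonneg (x * Real.sin t + y * Real.cos t - β)]
      have hvle : v * (x * Real.sin t + y * Real.cos t) ≤ v * β :=
        mul_le_mul_of_nonneg_left hle hv
      nlinarith [hvle]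
  have hset : { m : ℝ | ∃ uhf ∈ Set.Icc (-1 : ℝ) 1,
      IsGreatest ((fun ulf => x * (-(y * ω * uhf) + v * Real.sin ulf)
        + y * (x * ω * uhf + v * Real.cos ulf - V)) '' Set.Icc (-Real.pi) Real.pi) m }
      = {v * β - y * V} := by
    ext m
    simp only [Set.mem_setOf_eq, Set.mem_singleton_iff]
    constructor
    · rintro ⟨u, _, hg⟩
      exact hg.unique (hmax u)
    · rintro rfl
      exact ⟨0, by norm_num, hmax 0⟩
  rw [hset]
  have hsq : 0 ≤ 1 - (v / V) ^ 2 := by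
    have : (v / V) ^ 2 < 1 := by
      rw [div_pow, div_lt_one (by positivity)]
      nlinarith
    linarith
  constructor
  · intro h
    have h0 : v * β - y * V = 0 := (h.1).symm
    have hy : y = β * v / V := by field_simp; linarith
    refine ⟨hy, ?_⟩
    have hx2 : x ^ 2 = (β * Real.sqrt (1 - (v / V) ^ 2)) ^ 2 := by
      rw [mul_pow, Real.sq_sqrt hsq]
      rw [hy] at hxy
      field_simp at hxy ⊢
      nlinarith
    rcases sq_eq_sq_iff_eq_or_eq_neg.mp hx2 with h | h
    · exact Or.inl h
    · exact Or.inr h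
  · rintro ⟨hy, -⟩
    have : v * β - y * V = 0 := by rw [hy]; field_simp; ring
    rw [this]
    exact isLeast_singleton
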